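/- Let F be a k×p real matrix of rank p, let Σγ be a nonnegative definite (positive semidefinite) p×p real matrix, let Σε be a positive definite k×k real matrix, set V = F Σγ Fᵀ + Σε and M = Fᵀ V⁻¹ F. Then M is invertible and M⁻¹ = (Fᵀ Σε⁻¹ F)⁻¹ + Σγ. -/

import Mathlib

open Matrix

lemma mulVec_inj_of_rank {k p : ℕ} (F : Matrix (Fin k) (Fin p) ℝ) (hF : F.rank = p) :
    Function.Injective F.mulVec := by
  have h := LinearMap.finrank_range_add_finrank_ker F.mulVecLin
  rw [show Module.finrank ℝ (LinearMap.range F.mulVecLin) = F.rank from rfl, hF] at h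
  simp only [Module.finrank_pi, Fintype.card_fin] at h
  have hker : LinearMap.ker F.mulVecLin = ⊥ := by
    rw [Submodule.eq_bot_iff]
    intro x hx
    have : Module.finrank ℝ (LinearMap.ker F.mulVecLin) = 0 := by omega
    have := Submodule.finrank_eq_zero.mp this
    simpa [this] using hx
  have := LinearMap.ker_eq_bot.mp hker
  intro x y hxy
  exact this (by simpa [mulVecLin_apply] using hxy)

lemma pd_conj {k p : ℕ} (F : Matrix (Fin k) (Fin p) ℝ) (hF : Function.Injective F.mulVec)
    {A : Matrix (Fin k) (Fin k) ℝ} (hA : A.PosDef) : (Fᵀ * A * F).PosDef := by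
  rw [← conjTranspose_eq_transpose_of_trivial]
  refine PosDef.of_dotProduct_mulVec_pos (isHermitian_conjTranspose_mul_mul _ hA.isHermitian) fun x hx => ?_
  have h1 : F *ᵥ x ≠ 0 := fun h => hx (hF (by simpa using h))
  have := hA.dotProduct_mulVec_pos h1
  simpa only [star_mulVec, dotProduct_mulVec, vecMul_vecMul] using this

theorem inv_info_repr {k p : ℕ} (F : Matrix (Fin k) (Fin p) ℝ)
    (Sγ : Matrix (Fin p) (Fin p) ℝ) (Sε : Matrix (Fin k) (Fin k) ℝ)
    (hF : F.rank = p) (hγ : Sγ.PosSemidef) (hε : Sε.PosDef)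
    (V : Matrix (Fin k) (Fin k) ℝ) (hV : V = F * Sγ * Fᵀ + Sε)
    (M : Matrix (Fin p) (Fin p) ℝ) (hM : M = Fᵀ * V⁻¹ * F) :
    IsUnit M ∧ M⁻¹ = (Fᵀ * Sε⁻¹ * F)⁻¹ + Sγ := by
  have hFi := mulVec_inj_of_rank F hF
  have hVpd : V.PosDef := by
    rw [hV]
    refine Matrix.PosDef.posSemidef_add ?_ hε
    have := hγ.mul_mul_conjTranspose_same F
    rwa [conjTranspose_eq_transpose_of_trivial] at this
  have hApd : (Fᵀ * Sε⁻¹ * F).PosDef := pd_conj F hFi hε.inv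
  set A := Fᵀ * Sε⁻¹ * F with hA
  have hVu := hVpd.isUnit
  have hεu := hε.isUnit
  have hAu := hApd.isUnit
  have hεinv : Sε * Sε⁻¹ = 1 := mul_nonsing_inv _ (isUnit_iff_isUnit_det _ |>.1 hεu)
  have hVinv : V * V⁻¹ = 1 := mul_nonsing_inv _ (isUnit_iff_isUnit_det _ |>.1 hVu)
  have key : V * (Sε⁻¹ * F) = F * (Sγ * A + 1) := by
    rw [hV]
    simp only [Matrix.add_mul, Matrix.mul_add, Matrix.mul_one, hA]
    congr 1
    · simp only [Matrix.mul_assoc]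
    · rw [← Matrix.mul_assoc, hεinv, Matrix.one_mul]
  -- Sε⁻¹ * F = V⁻¹ * F * (Sγ * A + 1)
  have key2 : Sε⁻¹ * F = V⁻¹ * (F * (Sγ * A + 1)) := by
    rw [← key, ← Matrix.mul_assoc, nonsing_inv_mul _ (isUnit_iff_isUnit_det _ |>.1 hVu),
      Matrix.one_mul]
  -- A = M * (Sγ * A + 1)
  have key3 : A = M * (Sγ * A + 1) := by
    rw [hA, hM]
    calc Fᵀ * Sε⁻¹ * F = Fᵀ * (Sε⁻¹ * F) := by rw [Matrix.mul_assoc]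
    _ = Fᵀ * (V⁻¹ * (F * (Sγ * A + 1))) := by rw [key2]
    _ = Fᵀ * V⁻¹ * F * (Sγ * A + 1) := by simp only [Matrix.mul_assoc]
  have hAdet := isUnit_iff_isUnit_det _ |>.1 hAu
  have hmain : M * (Sγ + A⁻¹) = 1 := by
    have := congrArg (fun X => X * A⁻¹) key3
    simp only [Matrix.mul_assoc] at this
    rw [mul_nonsing_inv _ hAdet] at this
    calc M * (Sγ + A⁻¹) = M * ((Sγ * A + 1) * A⁻¹) := by
          rw [Matrix.add_mul, Matrix.one_mul, Matrix.mul_assoc, mul_nonsing_inv _ hAdet,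
            Matrix.mul_one]
    _ = 1 := by rw [← Matrix.mul_assoc, ← key3, mul_nonsing_inv _ hAdet]
  have hMu : IsUnit M := by
    rw [Matrix.isUnit_iff_isUnit_det]
    have := congrArg Matrix.det hmain
    rw [Matrix.det_mul, Matrix.det_one] at this
    exact IsUnit.of_mul_eq_one _ this
  refine ⟨hMu, ?_⟩
  rw [Matrix.inv_eq_right_inv hmain, add_comm]
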